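/- arXiv:2301.12837 — 3 statements merged into one kernel-verified Lean document; each statement's English description precedes it below -/
import Mathlib

section
/- Let A be an m×m complex matrix and B an n×n complex matrix. The linear map φ : M_{m,n}(ℂ) → M_{m,n}(ℂ) defined by φ(X) = AX − XB is a linear isomorphism if and only if the spectra of A and B are disjoint (i.e., A and B share no common eigenvalue). -/
open Matrix Polynomial

private lemma mem_spectrum_iff_root' {k : ℕ} (M : Matrix (Fin k) (Fin k) ℂ) (μ : ℂ) :
    μ ∈ spectrum ℂ M ↔ M.charpoly.IsRoot μ := by
  rw [spectrum.mem_iff, Matrix.isUnit_iff_isUnit_det, isUnit_iff_ne_zero, not_ne_iff,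
    Matrix.charpoly, IsRoot, ← Polynomial.coe_evalRingHom, RingHom.map_det]
  constructor <;> intro h <;> [rw [← h]; rw [← h]] <;> congr 1 <;>
    ext i j <;>
    simp [charmatrix_apply, Matrix.algebraMap_matrix_apply, diagonal_apply, apply_ite]

private lemma aeval_unit' {m n : ℕ} (A : Matrix (Fin m) (Fin m) ℂ)
    (B : Matrix (Fin n) (Fin n) ℂ) (hdisj : spectrum ℂ A ∩ spectrum ℂ B = ∅) :
    IsUnit (aeval A B.charpoly) := by
  have hsp : B.charpoly = (B.charpoly.roots.toList.map fun μ => X - C μ).prod := by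
    conv_lhs => rw [(IsAlgClosed.splits B.charpoly).eq_prod_roots_of_monic
      B.charpoly_monic]
    conv_lhs => rw [← B.charpoly.roots.coe_toList, Multiset.map_coe, Multiset.prod_coe]
  rw [hsp, map_list_prod]
  apply List.prod_isUnit
  intro x hx
  simp only [List.mem_map] at hx
  obtain ⟨q, ⟨ν, hν, rfl⟩, rfl⟩ := hx
  have hνB : ν ∈ spectrum ℂ B := by
    rw [mem_spectrum_iff_root']
    exact isRoot_of_mem_roots (Multiset.mem_toList.mp hν)
  have hνA : ν ∉ spectrum ℂ A := by
    intro h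
    exact absurd (Set.mem_inter h hνB) (by simp [hdisj])
  rw [spectrum.notMem_iff] at hνA
  simpa [map_sub, aeval_X, aeval_C, sub_eq_neg_add] using hνA.neg

private lemma sylv_comm' {m n : ℕ} {A : Matrix (Fin m) (Fin m) ℂ} {B : Matrix (Fin n) (Fin n) ℂ}
    {X : Matrix (Fin m) (Fin n) ℂ} (h : A * X = X * B) (p : ℂ[X]) :
    (aeval A p) * X = X * (aeval B p) := by
  have hpow : ∀ k : ℕ, A ^ k * X = X * B ^ k := by
    intro k
    induction k with
    | zero => simp
    | succ k ih =>
        rw [pow_succ, pow_succ, Matrix.mul_assoc, h, ← Matrix.mul_assoc, ih, Matrix.mul_assoc]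
  rw [Polynomial.aeval_eq_sum_range (x := A), Polynomial.aeval_eq_sum_range (x := B),
    Matrix.sum_mul, Matrix.mul_sum]
  refine Finset.sum_congr rfl fun i _ => ?_
  rw [Matrix.smul_mul, Matrix.mul_smul, hpow]

private lemma exists_eigvec' {m : ℕ} (A : Matrix (Fin m) (Fin m) ℂ) (lam : ℂ)
    (h : lam ∈ spectrum ℂ A) : ∃ v, v ≠ 0 ∧ A.mulVec v = lam • v := by
  have hd : ((algebraMap ℂ (Matrix (Fin m) (Fin m) ℂ)) lam - A).det = 0 := by
    have := spectrum.mem_iff.mp h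
    rwa [Matrix.isUnit_iff_isUnit_det, isUnit_iff_ne_zero, not_ne_iff] at this
  obtain ⟨v, hv, hv0⟩ := (Matrix.exists_mulVec_eq_zero_iff).mpr hd
  refine ⟨v, hv, ?_⟩
  rw [Matrix.sub_mulVec, sub_eq_zero] at hv0
  ext i
  rw [← congrFun hv0 i]
  simp [Matrix.mulVec, Matrix.algebraMap_matrix_apply, dotProduct, apply_ite, Finset.sum_ite_eq]

private lemma exists_left_eigvec' {n : ℕ} (B : Matrix (Fin n) (Fin n) ℂ) (lam : ℂ)
    (h : lam ∈ spectrum ℂ B) : ∃ w, w ≠ 0 ∧ Matrix.vecMul w B = lam • w := by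
  have hd : ((algebraMap ℂ (Matrix (Fin n) (Fin n) ℂ)) lam - B).det = 0 := by
    have := spectrum.mem_iff.mp h
    rwa [Matrix.isUnit_iff_isUnit_det, isUnit_iff_ne_zero, not_ne_iff] at this
  obtain ⟨w, hw, hw0⟩ := (Matrix.exists_vecMul_eq_zero_iff).mpr hd
  refine ⟨w, hw, ?_⟩
  rw [Matrix.vecMul_sub, sub_eq_zero] at hw0
  ext j
  rw [← congrFun hw0 j]
  simp [Matrix.vecMul, Matrix.algebraMap_matrix_apply, dotProduct, apply_ite,
    Finset.sum_ite_eq, mul_comm]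

/-- The Sylvester map X ↦ AX − XB on m×n complex matrices is bijective
iff A and B have disjoint spectra. -/
theorem sylvester_bijective_iff_spectra_disjoint
    (m n : ℕ) (A : Matrix (Fin m) (Fin m) ℂ) (B : Matrix (Fin n) (Fin n) ℂ) :
    Function.Bijective (fun X : Matrix (Fin m) (Fin n) ℂ => A * X - X * B) ↔
      spectrum ℂ A ∩ spectrum ℂ B = ∅ := by
  constructor
  · intro hbij
    by_contra hne
    obtain ⟨lam, hlA, hlB⟩ : ∃ μ, μ ∈ spectrum ℂ A ∧ μ ∈ spectrum ℂ B := by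
      rcases Set.nonempty_iff_ne_empty.mpr hne with ⟨μ, hμ⟩
      exact ⟨μ, hμ.1, hμ.2⟩
    obtain ⟨v, hv0, hv⟩ := exists_eigvec' A lam hlA
    obtain ⟨w, hw0, hw⟩ := exists_left_eigvec' B lam hlB
    set Y : Matrix (Fin m) (Fin n) ℂ := Matrix.of fun i j => v i * w j with hY
    have hYne : Y ≠ 0 := by
      obtain ⟨i, hi⟩ := Function.ne_iff.mp hv0
      obtain ⟨j, hj⟩ := Function.ne_iff.mp hw0
      intro h0
      have := congrFun (congrFun h0 i) j
      simp [hY] at this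
      rcases this with h | h
      · exact hi h
      · exact hj h
    have hker : A * Y - Y * B = 0 := by
      ext i j
      have h1 : (A * Y) i j = lam * (v i * w j) := by
        rw [Matrix.mul_apply]
        calc ∑ k, A i k * (v k * w j) = (∑ k, A i k * v k) * w j := by
              rw [Finset.sum_mul]; exact Finset.sum_congr rfl fun k _ => (mul_assoc _ _ _).symm
          _ = (A.mulVec v i) * w j := rfl
          _ = lam * (v i * w j) := by rw [hv]; simp [mul_assoc]
      have h2 : (Y * B) i j = lam * (v i * w j) := by
        rw [Matrix.mul_apply]
        calc ∑ k, v i * w k * B k j = v i * ∑ k, w k * B k j := by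
              rw [Finset.mul_sum]; exact Finset.sum_congr rfl fun k _ => mul_assoc _ _ _
          _ = v i * (Matrix.vecMul w B j) := rfl
          _ = lam * (v i * w j) := by rw [hw]; simp; ring
      simp [h1, h2]
    have : Y = 0 := by
      apply hbij.injective
      simp [hker]
    exact hYne this
  · intro hdisj
    let φ : Matrix (Fin m) (Fin n) ℂ →ₗ[ℂ] Matrix (Fin m) (Fin n) ℂ :=
      { toFun := fun X => A * X - X * B
        map_add' := fun X Y => by
          simp only [Matrix.mul_add, Matrix.add_mul]; abel
        map_smul' := fun c X => by
          simp [Matrix.mul_smul, Matrix.smul_mul, smul_sub] }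
    have hinj : Function.Injective φ := by
      rw [injective_iff_map_eq_zero]
      intro X hX
      have hAX : A * X = X * B := by
        have : A * X - X * B = 0 := hX
        rwa [sub_eq_zero] at this
      have hkey := sylv_comm' hAX B.charpoly
      rw [Matrix.aeval_self_charpoly, Matrix.mul_zero] at hkey
      obtain ⟨u, hu⟩ := aeval_unit' A B hdisj
      calc X = ((↑u⁻¹ : Matrix (Fin m) (Fin m) ℂ) * ↑u) * X := by rw [u.inv_mul, Matrix.one_mul]
        _ = (↑u⁻¹ : Matrix (Fin m) (Fin m) ℂ) * ((aeval A B.charpoly) * X) := by rw [Matrix.mul_assoc, hu]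
        _ = 0 := by rw [hkey, Matrix.mul_zero]
    exact ⟨hinj, LinearMap.injective_iff_surjective.mp hinj⟩
end

section
/- Let q ∈ ℂ with 0 < |q| < 1 and let A(x) = Σ_{n≥0} A_n x^n be a formal power series with m×m matrix coefficients such that A_0 is invertible and non-resonant, i.e., θ_j/θ_i ∉ {q^n : n ≥ 1} for all eigenvalues θ_i, θ_j of A_0. Then there exists a unique formal power series P(x) = Σ_{n≥0} P_n x^n with P_0 = I such that P(qx)^{-1} A(x) P(x) = A_0, i.e., A(x) P(x) = P(qx) A_0 as formal power series. -/
open Finset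

open Polynomial in
private lemma fuchs_aeval_comm {m : ℕ} (A B X : Matrix (Fin m) (Fin m) ℂ)
    (h : A * X = X * B) (p : ℂ[X]) : aeval A p * X = X * aeval B p := by
  have hpow : ∀ n, A ^ n * X = X * B ^ n := by
    intro n
    induction n with
    | zero => simp
    | succ n ih => rw [pow_succ, pow_succ, mul_assoc, h, ← mul_assoc, ih, mul_assoc]
  induction p using Polynomial.induction_on' with
  | add p q hp hq => simp [map_add, add_mul, mul_add, hp, hq]
  | monomial n a =>
      rw [aeval_monomial, aeval_monomial, mul_assoc, hpow, ← mul_assoc, Algebra.commutes a X,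
        mul_assoc]

/-- Injectivity of the Sylvester-type operator `X ↦ q^n • (X * A₀) - A₀ * X` under the
non-resonance hypothesis. -/
private lemma fuchs_inj {m : ℕ} (q : ℂ) (hq0 : q ≠ 0)
    (A0 : Matrix (Fin m) (Fin m) ℂ) (hA0 : IsUnit A0)
    (hres : ∀ θi ∈ spectrum ℂ A0, ∀ θj ∈ spectrum ℂ A0,
        ∀ n : ℕ, 1 ≤ n → θj / θi ≠ q ^ n)
    (n : ℕ) (hn : 1 ≤ n) (X : Matrix (Fin m) (Fin m) ℂ)
    (hX : A0 * X = q ^ n • (X * A0)) : X = 0 := by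
  rcases Nat.eq_zero_or_pos m with hm | hm
  · subst hm; exact Subsingleton.elim X 0
  haveI : NeZero m := ⟨hm.ne'⟩
  have hqn : (q : ℂ) ^ n ≠ 0 := pow_ne_zero _ hq0
  set B : Matrix (Fin m) (Fin m) ℂ := q ^ n • A0 with hB
  have hcomm : A0 * X = X * B := by
    rw [hX, hB, Matrix.mul_smul]
  set p : Polynomial ℂ := minpoly ℂ A0 with hp
  have h0 : X * Polynomial.aeval B p = 0 := by
    rw [← fuchs_aeval_comm A0 B X hcomm, hp, minpoly.aeval, zero_mul]
  have hunit : IsUnit (Polynomial.aeval B p) := by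
    by_contra hnu
    rw [← spectrum.zero_mem_iff ℂ] at hnu
    rw [spectrum.map_polynomial_aeval_of_degree_pos B p
      (minpoly.degree_pos (Algebra.IsIntegral.isIntegral A0))] at hnu
    obtain ⟨μ, hμB, hμroot⟩ := hnu
    -- μ ∈ spectrum of B = q^n • A0
    rw [show B = (Units.mk0 (q ^ n) hqn) • A0 from rfl,
      spectrum.unit_smul_eq_smul] at hμB
    obtain ⟨θ, hθ, rfl⟩ := hμB
    -- the root of the minpoly is in the spectrum of A0
    have hμA0 : (q ^ n * θ) ∈ spectrum ℂ A0 := by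
      let e := Matrix.toLinAlgEquiv (Pi.basisFun ℂ (Fin m))
      rw [← AlgEquiv.spectrum_eq e, ← Module.End.hasEigenvalue_iff_mem_spectrum]
      exact Module.End.hasEigenvalue_of_isRoot (by rwa [minpoly.algEquiv_eq])
    have hθ0 : θ ≠ 0 := by
      intro h; rw [h] at hθ
      exact (spectrum.zero_notMem_iff ℂ).mpr hA0 hθ
    exact hres θ hθ (q ^ n * θ) hμA0 n hn (by field_simp)
  calc X = X * Polynomial.aeval B p * ↑hunit.unit⁻¹ := by
        rw [mul_assoc, IsUnit.mul_val_inv, mul_one]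
    _ = 0 := by rw [h0, zero_mul]

/-- The solution sequence, defined by strong recursion from the solving functions `F n`. -/
private noncomputable def fuchsP {m : ℕ} (A : ℕ → Matrix (Fin m) (Fin m) ℂ)
    (F : ℕ → Matrix (Fin m) (Fin m) ℂ → Matrix (Fin m) (Fin m) ℂ) :
    ℕ → Matrix (Fin m) (Fin m) ℂ
  | 0 => 1
  | n + 1 => F (n + 1)
      (∑ k ∈ (Finset.range (n + 1)).attach, A (n + 1 - k.1) * fuchsP A F k.1)
  decreasing_by exact Finset.mem_range.mp k.2

/-- Formal normal form of a Fuchsian linear q-difference system at x = 0: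
there is a unique formal power series P(x) with P₀ = I such that
A(x) P(x) = P(qx) A₀, where the equality is coefficientwise. -/
theorem formal_normal_form_fuchsian
    (m : ℕ) (q : ℂ) (hq : 0 < ‖q‖) (hq1 : ‖q‖ < 1)
    (A : ℕ → Matrix (Fin m) (Fin m) ℂ)
    (hA0 : IsUnit (A 0))
    (hres : ∀ θi ∈ spectrum ℂ (A 0), ∀ θj ∈ spectrum ℂ (A 0),
        ∀ n : ℕ, 1 ≤ n → θj / θi ≠ q ^ n) :
    ∃! P : ℕ → Matrix (Fin m) (Fin m) ℂ,
      P 0 = 1 ∧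
      ∀ n : ℕ, ∑ k ∈ Finset.range (n + 1), A (n - k) * P k = q ^ n • (P n * A 0) := by
  have hq0 : q ≠ 0 := by
    intro h; rw [h] at hq; simp at hq
  -- the Sylvester operator `X ↦ q^n • (X * A 0) - A 0 * X` is bijective for n ≥ 1
  have hL : ∀ n : ℕ, 1 ≤ n → ∀ S : Matrix (Fin m) (Fin m) ℂ,
      ∃! X : Matrix (Fin m) (Fin m) ℂ, q ^ n • (X * A 0) - A 0 * X = S := by
    intro n hn
    set L : Matrix (Fin m) (Fin m) ℂ →ₗ[ℂ] Matrix (Fin m) (Fin m) ℂ :=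
      { toFun := fun X => q ^ n • (X * A 0) - A 0 * X
        map_add' := by
          intro X Y
          show q ^ n • ((X + Y) * A 0) - A 0 * (X + Y)
            = (q ^ n • (X * A 0) - A 0 * X) + (q ^ n • (Y * A 0) - A 0 * Y)
          rw [add_mul, mul_add, smul_add]
          abel
        map_smul' := by
          intro c X
          show q ^ n • ((c • X) * A 0) - A 0 * (c • X)
            = (RingHom.id ℂ) c • (q ^ n • (X * A 0) - A 0 * X)
          rw [RingHom.id_apply, Matrix.smul_mul, Matrix.mul_smul, smul_sub, smul_comm] }
      with hLdef
    have hinj : Function.Injective L := by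
      rw [← LinearMap.ker_eq_bot, LinearMap.ker_eq_bot']
      intro X hX
      apply fuchs_inj q hq0 (A 0) hA0 hres n hn
      have hX' : q ^ n • (X * A 0) - A 0 * X = 0 := hX
      exact (sub_eq_zero.mp hX').symm
    have hsurj : Function.Surjective L := LinearMap.injective_iff_surjective.mp hinj
    intro S
    obtain ⟨X, hXS⟩ := hsurj S
    exact ⟨X, hXS, fun Y hY => hinj (by rw [show L Y = S from hY, ← hXS])⟩
  classical
  -- solving function
  set F : ℕ → Matrix (Fin m) (Fin m) ℂ → Matrix (Fin m) (Fin m) ℂ :=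
    fun n S => if h : 1 ≤ n then (hL n h S).exists.choose else 0 with hF
  have hFspec : ∀ n : ℕ, 1 ≤ n → ∀ S,
      q ^ n • (F n S * A 0) - A 0 * F n S = S := by
    intro n hn S
    simp only [hF, dif_pos hn]
    exact (hL n hn S).exists.choose_spec
  set P : ℕ → Matrix (Fin m) (Fin m) ℂ := fuchsP A F with hP
  have hP0 : P 0 = 1 := by rw [hP, fuchsP]
  have hPsucc : ∀ n : ℕ,
      P (n + 1) = F (n + 1) (∑ k ∈ Finset.range (n + 1), A (n + 1 - k) * P k) := by
    intro n
    rw [hP, fuchsP, ← Finset.sum_attach (Finset.range (n + 1)) (fun k => A (n + 1 - k) * fuchsP A F k)]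
  have hPrec : ∀ n : ℕ,
      ∑ k ∈ Finset.range (n + 1), A (n - k) * P k = q ^ n • (P n * A 0) := by
    intro n
    cases n with
    | zero => simp [hP0]
    | succ n =>
        have hspec := hFspec (n + 1) (Nat.le_add_left 1 n)
          (∑ k ∈ Finset.range (n + 1), A (n + 1 - k) * P k)
        rw [← hPsucc n] at hspec
        rw [Finset.sum_range_succ, Nat.sub_self, ← hspec]
        abel
  refine ⟨P, ⟨hP0, hPrec⟩, ?_⟩
  rintro Q ⟨hQ0, hQrec⟩
  funext n
  induction n using Nat.strong_induction_on with
  | _ n ih =>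
      cases n with
      | zero => rw [hQ0, hP0]
      | succ n =>
          have hsum : ∑ k ∈ Finset.range (n + 1), A (n + 1 - k) * Q k
              = ∑ k ∈ Finset.range (n + 1), A (n + 1 - k) * P k := by
            apply Finset.sum_congr rfl
            intro k hk
            rw [ih k (Finset.mem_range.mp hk)]
          have hQn : q ^ (n + 1) • (Q (n + 1) * A 0) - A 0 * Q (n + 1)
              = ∑ k ∈ Finset.range (n + 1), A (n + 1 - k) * P k := by
            have h1 := hQrec (n + 1)
            rw [Finset.sum_range_succ, Nat.sub_self] at h1
            rw [sub_eq_iff_eq_add, ← hsum]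
            exact h1.symm
          have hPn : q ^ (n + 1) • (P (n + 1) * A 0) - A 0 * P (n + 1)
              = ∑ k ∈ Finset.range (n + 1), A (n + 1 - k) * P k := by
            have h1 := hPrec (n + 1)
            rw [Finset.sum_range_succ, Nat.sub_self] at h1
            rw [sub_eq_iff_eq_add]
            exact h1.symm
          exact ((hL (n + 1) (Nat.le_add_left 1 n) _).unique hQn hPn)
end

section
/- Let q ∈ ℂ with 0 < |q| < 1, and let A(x) = Σ_{n≥0} A_n x^n be a formal power series with m×m matrix coefficients whose constant term is A_0 = Θ ⊕ O_{m−s}, where Θ = diag(θ_1,…,θ_s) with all θ_i ≠ 0 and θ_j/θ_i ∉ q^{ℤ≥1} for all i,j. Then there exists a formal power series P(x) = Σ_{n≥0} P_n x^n with P_0 = I, whose coefficients P_n (n ≥ 1) have vanishing (1,1)-block (size s×s) and vanishing (2,2)-block (size (m−s)×(m−s)), such that B(x) := P(qx)^{-1} A(x) P(x) is block-diagonal with blocks of sizes s and m−s. -/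
open Matrix Finset

/-- One step of the construction: given `C_n`, produce `(P_n, B_n)`. -/
noncomputable def qDiffStep (s r : ℕ) (q : ℂ) (θ : Fin s → ℂ) (n : ℕ)
    (C : Matrix (Fin s ⊕ Fin r) (Fin s ⊕ Fin r) ℂ) :
    Matrix (Fin s ⊕ Fin r) (Fin s ⊕ Fin r) ℂ ×
      Matrix (Fin s ⊕ Fin r) (Fin s ⊕ Fin r) ℂ :=
  (Matrix.fromBlocks 0 (-(Matrix.diagonal (fun i => (θ i)⁻¹) * C.toBlocks₁₂))
      ((q ^ (n+1))⁻¹ • (C.toBlocks₂₁ * Matrix.diagonal (fun i => (θ i)⁻¹))) 0,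
   Matrix.fromBlocks C.toBlocks₁₁ 0 0 C.toBlocks₂₂)

noncomputable def qDiffPB (s r : ℕ) (q : ℂ) (θ : Fin s → ℂ)
    (A : ℕ → Matrix (Fin s ⊕ Fin r) (Fin s ⊕ Fin r) ℂ) :
    ℕ → Matrix (Fin s ⊕ Fin r) (Fin s ⊕ Fin r) ℂ ×
        Matrix (Fin s ⊕ Fin r) (Fin s ⊕ Fin r) ℂ
  | 0 => (1, A 0)
  | (n+1) =>
    qDiffStep s r q θ n
      (A (n+1) + ∑ j ∈ (Finset.Icc 1 n).attach,
        (A (n+1-j.1) * (qDiffPB s r q θ A j.1).1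
          - q ^ j.1 • ((qDiffPB s r q θ A j.1).1 * (qDiffPB s r q θ A (n+1-j.1)).2)))
decreasing_by
  all_goals (have := j.2; simp only [Finset.mem_Icc] at this; omega)

lemma qDiffPB_zero (s r : ℕ) (q : ℂ) (θ : Fin s → ℂ)
    (A : ℕ → Matrix (Fin s ⊕ Fin r) (Fin s ⊕ Fin r) ℂ) :
    qDiffPB s r q θ A 0 = (1, A 0) := by rw [qDiffPB]

lemma qDiffPB_succ (s r : ℕ) (q : ℂ) (θ : Fin s → ℂ)
    (A : ℕ → Matrix (Fin s ⊕ Fin r) (Fin s ⊕ Fin r) ℂ) (n : ℕ) :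
    qDiffPB s r q θ A (n+1) = qDiffStep s r q θ n
      (A (n+1) + ∑ j ∈ (Finset.Icc 1 n).attach,
        (A (n+1-j.1) * (qDiffPB s r q θ A j.1).1
          - q ^ j.1 • ((qDiffPB s r q θ A j.1).1 * (qDiffPB s r q θ A (n+1-j.1)).2))) := by
  rw [qDiffPB]

lemma qDiffStep_eq (s r : ℕ) (q : ℂ) (hq : q ≠ 0) (θ : Fin s → ℂ) (hθ : ∀ i, θ i ≠ 0)
    (n : ℕ) (C : Matrix (Fin s ⊕ Fin r) (Fin s ⊕ Fin r) ℂ) :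
    C + Matrix.fromBlocks (Matrix.diagonal θ) 0 0 0 * (qDiffStep s r q θ n C).1 =
      q ^ (n+1) • ((qDiffStep s r q θ n C).1 * Matrix.fromBlocks (Matrix.diagonal θ) 0 0 0)
        + (qDiffStep s r q θ n C).2 := by
  have hΘ : Matrix.diagonal θ * Matrix.diagonal (fun i => (θ i)⁻¹) = (1 : Matrix (Fin s) (Fin s) ℂ) := by
    rw [Matrix.diagonal_mul_diagonal]
    convert Matrix.diagonal_one using 2
    exact funext fun i => mul_inv_cancel₀ (hθ i)
  have hΘ' : Matrix.diagonal (fun i => (θ i)⁻¹) * Matrix.diagonal θ = (1 : Matrix (Fin s) (Fin s) ℂ) := by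
    rw [Matrix.diagonal_mul_diagonal]
    convert Matrix.diagonal_one using 2
    exact funext fun i => inv_mul_cancel₀ (hθ i)
  have hqn : q ^ (n+1) ≠ 0 := pow_ne_zero _ hq
  nth_rewrite 1 [← Matrix.fromBlocks_toBlocks C]
  simp only [qDiffStep, Matrix.fromBlocks_multiply, Matrix.fromBlocks_add,
    Matrix.fromBlocks_smul]
  rw [Matrix.fromBlocks_inj]
  refine ⟨by simp, ?_, ?_, by simp⟩
  · -- block (1,2)
    rw [Matrix.mul_neg, ← Matrix.mul_assoc, hΘ, Matrix.one_mul]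
    simp
  · -- block (2,1)
    simp only [Matrix.zero_mul, Matrix.mul_zero, add_zero, zero_add]
    rw [Matrix.smul_mul, smul_smul, mul_inv_cancel₀ hqn, one_smul, Matrix.mul_assoc, hΘ', Matrix.mul_one]

/-- Block-diagonalization of a non-Fuchsian linear q-difference system at x = 0:
if A₀ = Θ ⊕ O with Θ = diag(θ₁,…,θ_s) invertible and non-resonant, then there is
a formal power series P(x) with P₀ = I whose higher coefficients have vanishing
diagonal blocks, such that B(x) = P(qx)⁻¹ A(x) P(x) is block-diagonal. -/
theorem block_diagonalization_nonFuchsian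
    (s r : ℕ) (q : ℂ) (hq0 : 0 < ‖q‖) (hq1 : ‖q‖ < 1)
    (θ : Fin s → ℂ) (hθ : ∀ i, θ i ≠ 0)
    (hres : ∀ i j : Fin s, ∀ n : ℕ, 1 ≤ n → θ j / θ i ≠ q ^ n)
    (A : ℕ → Matrix (Fin s ⊕ Fin r) (Fin s ⊕ Fin r) ℂ)
    (hA0 : A 0 = Matrix.fromBlocks (Matrix.diagonal θ) 0 0 0) :
    ∃ P B : ℕ → Matrix (Fin s ⊕ Fin r) (Fin s ⊕ Fin r) ℂ,
      P 0 = 1 ∧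
      (∀ n : ℕ, 1 ≤ n → (P n).toBlocks₁₁ = 0 ∧ (P n).toBlocks₂₂ = 0) ∧
      (∀ n : ℕ, (B n).toBlocks₁₂ = 0 ∧ (B n).toBlocks₂₁ = 0) ∧
      (∀ n : ℕ, ∑ k ∈ Finset.range (n + 1), A (n - k) * P k =
        ∑ k ∈ Finset.range (n + 1), q ^ (n - k) • (P (n - k) * B k)) := by
  have hq : q ≠ 0 := by
    intro h; rw [h] at hq0; simp at hq0
  refine ⟨fun n => (qDiffPB s r q θ A n).1, fun n => (qDiffPB s r q θ A n).2, ?_, ?_, ?_, ?_⟩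
  · simp [qDiffPB_zero]
  · rintro (_ | n) hn
    · omega
    · constructor <;> simp [qDiffPB_succ, qDiffStep]
  · rintro (_ | n)
    · simp [qDiffPB_zero, hA0]
    · constructor <;> simp [qDiffPB_succ, qDiffStep]
  · rintro (_ | n)
    · simp [qDiffPB_zero]
    · -- main recursion
      beta_reduce
      set F := qDiffPB s r q θ A with hF
      set C : Matrix (Fin s ⊕ Fin r) (Fin s ⊕ Fin r) ℂ :=
        A (n+1) + ∑ j ∈ (Finset.Icc 1 n).attach,
          (A (n+1-j.1) * (F j.1).1 - q ^ j.1 • ((F j.1).1 * (F (n+1-j.1)).2)) with hC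
      have hFsucc : F (n+1) = qDiffStep s r q θ n C := qDiffPB_succ s r q θ A n
      have hF0 : F 0 = (1, A 0) := qDiffPB_zero s r q θ A
      have key := qDiffStep_eq s r q hq θ hθ n C
      rw [← hFsucc, ← hA0] at key
      -- rewrite C as a sum over range n
      have hCsum : C = A (n+1) + ∑ i ∈ Finset.range n,
          (A (n-i) * (F (i+1)).1 - q ^ (i+1) • ((F (i+1)).1 * (F (n-i)).2)) := by
        rw [hC, Finset.sum_attach (Finset.Icc 1 n)
          (fun j => A (n+1-j) * (F j).1 - q ^ j • ((F j).1 * (F (n+1-j)).2))]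
        congr 1
        rw [show Finset.Icc 1 n = Finset.Ico 1 (n+1) by rfl, Finset.sum_Ico_eq_sum_range]
        refine Finset.sum_congr (by simp) fun i hi => ?_
        simp only [Finset.mem_range] at hi
        have h1 : n + 1 - (1 + i) = n - i := by omega
        rw [h1, add_comm 1 i]
      -- now massage the goal
      have hL : (∑ k ∈ Finset.range (n+2), A (n+1-k) * (F k).1) =
          (∑ i ∈ Finset.range n, A (n-i) * (F (i+1)).1)
            + A (n+1) * (F 0).1 + A 0 * (F (n+1)).1 := by
        rw [Finset.sum_range_succ, Finset.sum_range_succ']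
        simp only [Nat.sub_self, Nat.sub_zero, Nat.succ_sub_succ_eq_sub]
      have hR : (∑ k ∈ Finset.range (n+2), q ^ (n+1-k) • ((F (n+1-k)).1 * (F k).2)) =
          (∑ i ∈ Finset.range n, q ^ (n-i) • ((F (n-i)).1 * (F (i+1)).2))
            + q ^ (n+1) • ((F (n+1)).1 * (F 0).2)
            + q ^ 0 • ((F 0).1 * (F (n+1)).2) := by
        rw [Finset.sum_range_succ, Finset.sum_range_succ']
        simp only [Nat.sub_self, Nat.sub_zero, Nat.succ_sub_succ_eq_sub]
      rw [hL, hR]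
      -- reflect the middle sum on the RHS
      have hrefl : (∑ i ∈ Finset.range n, q ^ (n-i) • ((F (n-i)).1 * (F (i+1)).2)) =
          ∑ i ∈ Finset.range n, q ^ (i+1) • ((F (i+1)).1 * (F (n-i)).2) := by
        rw [← Finset.sum_range_reflect]
        refine Finset.sum_congr rfl fun i hi => ?_
        simp only [Finset.mem_range] at hi
        have h1 : n - (n - 1 - i) = i + 1 := by omega
        have h2 : n - 1 - i + 1 = n - i := by omega
        rw [h1, h2]
      rw [hrefl, hF0]
      simp only [Matrix.one_mul, Matrix.mul_one, pow_zero, one_smul]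
      have expand : ∑ i ∈ Finset.range n, A (n-i) * (F (i+1)).1 =
          C - A (n+1) + ∑ i ∈ Finset.range n, q ^ (i+1) • ((F (i+1)).1 * (F (n-i)).2) := by
        rw [hCsum, Finset.sum_sub_distrib]
        abel
      have hB : (F (n+1)).2 =
          C + A 0 * (F (n+1)).1 - q ^ (n+1) • ((F (n+1)).1 * A 0) := by
        rw [key]; abel
      rw [expand, hB]
      abel
end
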